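/- The elliptic quadric is a complex hypersurface in suitable coordinates: the ℝ-linear bijection Φ : ℂ⁴ → ℂ⁴ given by Φ(z₁, z₂, w₁, w₂) = (z₁, conj(z₂), w₁ + i·w₂, conj(w₁) + i·conj(w₂)) maps the elliptic quadric Q = {(z₁,z₂,w₁,w₂) ∈ ℂ⁴ : Im w₁ = Re(z₁·conj(z₂)) and Im w₂ = Im(z₁·conj(z₂))} bijectively onto the complex affine hypersurface {(ζ₁, ζ₂, η₁, η₂) ∈ ℂ⁴ : η₁ − η₂ = 2i·ζ₁·ζ₂}. -/
import Mathlib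


open Complex

/-- The ℝ-linear change of coordinates
`Φ(z₁, z₂, w₁, w₂) = (z₁, conj z₂, w₁ + i w₂, conj w₁ + i conj w₂)`. -/
def ellipticCoords : ℂ × ℂ × ℂ × ℂ → ℂ × ℂ × ℂ × ℂ :=
  fun p => (p.1, starRingEnd ℂ p.2.1, p.2.2.1 + Complex.I * p.2.2.2,
    starRingEnd ℂ p.2.2.1 + Complex.I * starRingEnd ℂ p.2.2.2)

/-- The elliptic quadric `{Im w₁ = Re(z₁ z̄₂), Im w₂ = Im(z₁ z̄₂)} ⊆ ℂ⁴`. -/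
def ellipticQuadric : Set (ℂ × ℂ × ℂ × ℂ) :=
  {p | (p.2.2.1).im = (p.1 * starRingEnd ℂ p.2.1).re ∧
       (p.2.2.2).im = (p.1 * starRingEnd ℂ p.2.1).im}

/-- The complex affine hypersurface `{η₁ − η₂ = 2i ζ₁ ζ₂} ⊆ ℂ⁴`. -/
def complexHypersurface : Set (ℂ × ℂ × ℂ × ℂ) :=
  {q | q.2.2.1 - q.2.2.2 = 2 * Complex.I * q.1 * q.2.1}

/-- Inverse of `ellipticCoords`. -/
noncomputable def ellipticCoordsInv : ℂ × ℂ × ℂ × ℂ → ℂ × ℂ × ℂ × ℂ :=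
  fun q => (q.1, starRingEnd ℂ q.2.1,
    (q.2.2.1 + starRingEnd ℂ q.2.2.2) / 2,
    (q.2.2.1 - starRingEnd ℂ q.2.2.2) / (2 * Complex.I))

lemma ellipticCoords_leftInv : Function.LeftInverse ellipticCoordsInv ellipticCoords := by
  intro p
  simp only [ellipticCoords, ellipticCoordsInv, map_add, map_mul, Complex.conj_conj,
    Complex.conj_I]
  refine Prod.ext rfl (Prod.ext rfl (Prod.ext ?_ ?_)) <;>
    · simp only []
      field_simp
      ring

lemma ellipticCoords_rightInv : Function.RightInverse ellipticCoordsInv ellipticCoords := by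
  intro q
  simp only [ellipticCoords, ellipticCoordsInv, map_add, map_sub, map_mul, map_div₀,
    Complex.conj_conj, Complex.conj_I, Complex.conj_ofNat]
  refine Prod.ext rfl (Prod.ext rfl (Prod.ext ?_ ?_)) <;>
    · simp only []
      field_simp
      ring

lemma ellipticCoords_mem_iff (p : ℂ × ℂ × ℂ × ℂ) :
    p ∈ ellipticQuadric ↔ ellipticCoords p ∈ complexHypersurface := by
  simp only [ellipticQuadric, complexHypersurface, ellipticCoords, Set.mem_setOf_eq,
    Complex.ext_iff, Complex.add_re, Complex.add_im, Complex.sub_re, Complex.sub_im,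
    Complex.mul_re, Complex.mul_im, Complex.I_re, Complex.I_im, Complex.conj_re,
    Complex.conj_im, Complex.re_ofNat, Complex.im_ofNat]
  constructor
  · rintro ⟨h1, h2⟩
    constructor <;> · simp only [h1, h2]; ring
  · rintro ⟨h1, h2⟩
    constructor <;> linarith

/-- In suitable coordinates the elliptic quadric becomes a complex hypersurface:
`Φ` is a bijection of `ℂ⁴` mapping the elliptic quadric onto `{η₁ − η₂ = 2i ζ₁ ζ₂}`. -/
theorem elliptic_quadric_is_complex_hypersurface :
    Function.Bijective ellipticCoords ∧
    Set.BijOn ellipticCoords ellipticQuadric complexHypersurface := by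
  have hbij : Function.Bijective ellipticCoords :=
    ⟨ellipticCoords_leftInv.injective, ellipticCoords_rightInv.surjective⟩
  refine ⟨hbij, ?_, hbij.injective.injOn, ?_⟩
  · intro p hp
    exact (ellipticCoords_mem_iff p).1 hp
  · intro q hq
    refine ⟨ellipticCoordsInv q, ?_, ellipticCoords_rightInv q⟩
    rw [ellipticCoords_mem_iff, ellipticCoords_rightInv q]
    exact hq
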